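/- Suppose α is an arc or curve containing two distinct blockers β and γ. Then β and γ overlap in at most one snippet; this overlapping snippet must be a vertical dual, and overlap is only possible if β and γ are both right blockers or both left blockers. Moreover, no two blockers can intersect in exactly one endpoint (i.e., be directly adjacent). -/
import Mathlib


/-- Overlap of blockers.  Model a snippet-decomposed arc or curve `α` with
`n` snippets by the function `reg` recording the region containing each snippet; consecutive
snippets lie in distinct regions, and no two consecutive snippets both lie in complementary
regions (complementary regions are separated by the tie neighbourhood).  A snippet may be a
right or left vertical dual (then it lies in a complementary region, and it cannot be both),
or a dual tie in a branch rectangle (then it does not lie in a complementary region).  A right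
(resp. left) blocker starting at `i` consists of the snippets `i, i+1, i+2`, where `i` and
`i+2` are right (resp. left) vertical duals and `i+1` is a branch dual.

Then any two distinct blockers overlap in at most one snippet; if they overlap, both are right
blockers or both are left blockers, and every common snippet is a vertical dual.  Moreover, no
two blockers intersect in exactly one endpoint (i.e. are directly adjacent: `j = i + 3` or
`i = j + 3` is impossible). -/
theorem stmt_7
    (Region : Type) (comp : Region → Prop)
    (n : ℕ) (reg : ℕ → Region)
    (h_adj : ∀ i, i + 1 < n → reg i ≠ reg (i + 1))
    (h_sep : ∀ i, i + 1 < n → ¬(comp (reg i) ∧ comp (reg (i + 1))))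
    (vertDualR vertDualL branchDual : ℕ → Prop)
    (h_vd_comp : ∀ i, vertDualR i ∨ vertDualL i → comp (reg i))
    (h_bd_tie : ∀ i, branchDual i → ¬ comp (reg i))
    (h_not_both : ∀ i, ¬(vertDualR i ∧ vertDualL i))
    (IsBlockerR IsBlockerL : ℕ → Prop)
    (h_BR : ∀ i, IsBlockerR i ↔
        i + 2 < n ∧ vertDualR i ∧ branchDual (i + 1) ∧ vertDualR (i + 2))
    (h_BL : ∀ i, IsBlockerL i ↔
        i + 2 < n ∧ vertDualL i ∧ branchDual (i + 1) ∧ vertDualL (i + 2)) :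
    ∀ i j, i ≠ j →
      (IsBlockerR i ∨ IsBlockerL i) → (IsBlockerR j ∨ IsBlockerL j) →
      ((Finset.Icc i (i + 2) ∩ Finset.Icc j (j + 2)).card ≤ 1 ∧
        ((Finset.Icc i (i + 2) ∩ Finset.Icc j (j + 2)).Nonempty →
          ((IsBlockerR i ∧ IsBlockerR j) ∨ (IsBlockerL i ∧ IsBlockerL j)) ∧
          ∀ k ∈ Finset.Icc i (i + 2) ∩ Finset.Icc j (j + 2),
            vertDualR k ∨ vertDualL k) ∧
        j ≠ i + 3 ∧ i ≠ j + 3) := by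

  intro i j hne hi hj
  have main : ∀ i j, i < j →
      (IsBlockerR i ∨ IsBlockerL i) → (IsBlockerR j ∨ IsBlockerL j) →
      ((Finset.Icc i (i + 2) ∩ Finset.Icc j (j + 2)).card ≤ 1 ∧
        ((Finset.Icc i (i + 2) ∩ Finset.Icc j (j + 2)).Nonempty →
          ((IsBlockerR i ∧ IsBlockerR j) ∨ (IsBlockerL i ∧ IsBlockerL j)) ∧
          ∀ k ∈ Finset.Icc i (i + 2) ∩ Finset.Icc j (j + 2),
            vertDualR k ∨ vertDualL k) ∧
        j ≠ i + 3 ∧ i ≠ j + 3) := by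
    intro i j hij hi hj
    have hi' : i + 2 < n ∧ (vertDualR i ∨ vertDualL i) ∧ branchDual (i+1) ∧
        (vertDualR (i+2) ∨ vertDualL (i+2)) := by
      rcases hi with h | h
      · obtain ⟨a, b, c, d⟩ := (h_BR i).1 h; exact ⟨a, Or.inl b, c, Or.inl d⟩
      · obtain ⟨a, b, c, d⟩ := (h_BL i).1 h; exact ⟨a, Or.inr b, c, Or.inr d⟩
    have hj' : j + 2 < n ∧ (vertDualR j ∨ vertDualL j) ∧ branchDual (j+1) ∧
        (vertDualR (j+2) ∨ vertDualL (j+2)) := by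
      rcases hj with h | h
      · obtain ⟨a, b, c, d⟩ := (h_BR j).1 h; exact ⟨a, Or.inl b, c, Or.inl d⟩
      · obtain ⟨a, b, c, d⟩ := (h_BL j).1 h; exact ⟨a, Or.inr b, c, Or.inr d⟩
    have h1 : j ≠ i + 1 := by
      intro h
      exact h_bd_tie _ hi'.2.2.1 (h_vd_comp _ (h ▸ hj'.2.1))
    have h3 : j ≠ i + 3 := by
      intro h
      apply h_sep (i+2) (by omega)
      refine ⟨h_vd_comp _ hi'.2.2.2, ?_⟩
      have := h_vd_comp _ hj'.2.1
      rw [h] at this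
      exact this
    rcases eq_or_lt_of_le (show i + 2 ≤ j by omega) with h2 | h4
    · -- j = i + 2
      have hset : Finset.Icc i (i + 2) ∩ Finset.Icc j (j + 2) = {i + 2} := by
        ext k; simp only [Finset.mem_inter, Finset.mem_Icc, Finset.mem_singleton]; omega
      refine ⟨by rw [hset]; simp, ?_, h3, by omega⟩
      intro _
      constructor
      · rcases hi with hiR | hiL <;> rcases hj with hjR | hjL
        · exact Or.inl ⟨hiR, hjR⟩
        · exfalso
          have d1 : vertDualR (i+2) := ((h_BR i).1 hiR).2.2.2
          have d2 : vertDualL (i+2) := h2 ▸ ((h_BL j).1 hjL).2.1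
          exact h_not_both _ ⟨d1, d2⟩
        · exfalso
          have d1 : vertDualL (i+2) := ((h_BL i).1 hiL).2.2.2
          have d2 : vertDualR (i+2) := h2 ▸ ((h_BR j).1 hjR).2.1
          exact h_not_both _ ⟨d2, d1⟩
        · exact Or.inr ⟨hiL, hjL⟩
      · intro k hk
        rw [hset, Finset.mem_singleton] at hk
        exact hk ▸ hi'.2.2.2
    · -- j ≥ i + 4 (since j ≠ i+3)
      have hset : Finset.Icc i (i + 2) ∩ Finset.Icc j (j + 2) = ∅ := by
        ext k; simp only [Finset.mem_inter, Finset.mem_Icc, Finset.notMem_empty,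
          iff_false, not_and]; omega
      rw [hset]
      refine ⟨by simp, ?_, h3, by omega⟩
      intro h
      simp at h
  rcases lt_or_gt_of_ne hne with h | h
  · exact main i j h hi hj
  · have H := main j i h hj hi
    rw [Finset.inter_comm]
    refine ⟨H.1, ?_, H.2.2.2, H.2.2.1⟩
    intro hne'
    obtain ⟨hb, hv⟩ := H.2.1 hne'
    exact ⟨hb.imp (fun x => ⟨x.2, x.1⟩) (fun x => ⟨x.2, x.1⟩), hv⟩
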